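/- In a rooted tree, if two trees on the same vertex set with the same root have identical LCA functions (i.e., for every pair of vertices (i,j), the least common ancestor of i and j is the same in both trees), then the two trees are equal (have the same parent function). -/
import Mathlib


/-- A rooted tree on a vertex set `V`: a root, a parent function fixing the
root, such that iterating the parent function from any vertex reaches the root. -/
structure RTree (V : Type) where
  root : V
  parent : V → V
  parent_root : parent root = root
  reaches_root : ∀ v : V, ∃ n : ℕ, parent^[n] v = root

/-- `a` is an ancestor of `v` (every vertex is an ancestor of itself). -/
def RTree.isAncestor {V : Type} (T : RTree V) (a v : V) : Prop :=
  ∃ n : ℕ, T.parent^[n] v = a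

/-- `a` is the least common ancestor of `u` and `v`: it is a common ancestor,
and every common ancestor of `u` and `v` is an ancestor of `a`. -/
def RTree.IsLCA {V : Type} (T : RTree V) (a u v : V) : Prop :=
  T.isAncestor a u ∧ T.isAncestor a v ∧
    ∀ b : V, T.isAncestor b u → T.isAncestor b v → T.isAncestor b a

namespace RTree

variable {V : Type} (T : RTree V)

lemma anc_refl (v : V) : T.isAncestor v v := ⟨0, rfl⟩

lemma anc_step (v : V) : T.isAncestor (T.parent v) v := ⟨1, rfl⟩

lemma cycle_root {x : V} {k : ℕ} (hk : 1 ≤ k) (h : T.parent^[k] x = x) :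
    x = T.root := by
  obtain ⟨N, hN⟩ := T.reaches_root x
  have hj : ∀ j : ℕ, T.parent^[j * k] x = x := by
    intro j
    induction j with
    | zero => simp
    | succ j ih =>
      rw [Nat.succ_mul, Function.iterate_add_apply, h, ih]
  have hNk : N ≤ N * k := Nat.le_mul_of_pos_right N hk
  have : T.parent^[N * k] x = T.root := by
    have : T.parent^[N * k - N + N] x = T.parent^[N * k - N] T.root := by
      rw [Function.iterate_add_apply, hN]
    rw [Nat.sub_add_cancel hNk] at this
    rw [this, Function.iterate_fixed T.parent_root]
  rw [hj N] at this
  exact this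

lemma anc_antisymm {x y : V} (hxy : T.isAncestor x y) (hyx : T.isAncestor y x) :
    x = y := by
  obtain ⟨n, hn⟩ := hxy
  obtain ⟨m, hm⟩ := hyx
  rcases Nat.eq_zero_or_pos n with h0 | hpos
  · subst h0; exact hn.symm
  · have hx : T.parent^[n + m] x = x := by
      rw [Function.iterate_add_apply, hm, hn]
    have hy : T.parent^[m + n] y = y := by
      rw [Function.iterate_add_apply, hn, hm]
    have : 1 ≤ n + m := le_trans hpos (Nat.le_add_right n m)
    rw [T.cycle_root this hx, T.cycle_root (by omega : 1 ≤ m + n) hy]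

lemma strict_anc {b v : V} (h : T.isAncestor b v) (hne : b ≠ v) :
    T.isAncestor b (T.parent v) := by
  obtain ⟨n, hn⟩ := h
  cases n with
  | zero => exact absurd hn.symm hne
  | succ k => exact ⟨k, by rw [← Function.iterate_succ_apply]; exact hn⟩

lemma parent_ne {v : V} (hv : v ≠ T.root) : T.parent v ≠ v := by
  intro h
  obtain ⟨n, hn⟩ := T.reaches_root v
  rw [Function.iterate_fixed h n] at hn
  exact hv hn

lemma anc_iff_lca (lca : V → V → V) (h : ∀ u v : V, T.IsLCA (lca u v) u v)
    (a v : V) : T.isAncestor a v ↔ lca a v = a := by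
  constructor
  · intro hav
    obtain ⟨h1, h2, h3⟩ := h a v
    exact T.anc_antisymm h1 (h3 a (T.anc_refl a) hav)
  · intro he
    have := (h a v).2.1
    rwa [he] at this

end RTree

/-- If two rooted trees on the same finite vertex set with the same root have
identical LCA functions, then they have the same parent function. -/
theorem lca_determines_tree {V : Type} [Fintype V] (T₁ T₂ : RTree V)
    (hroot : T₁.root = T₂.root) (lca : V → V → V)
    (h₁ : ∀ u v : V, T₁.IsLCA (lca u v) u v)
    (h₂ : ∀ u v : V, T₂.IsLCA (lca u v) u v) :
    T₁.parent = T₂.parent := by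
  have anc_iff : ∀ a v : V, T₁.isAncestor a v ↔ T₂.isAncestor a v := by
    intro a v
    rw [T₁.anc_iff_lca lca h₁, T₂.anc_iff_lca lca h₂]
  funext v
  by_cases hv : v = T₁.root
  · subst hv
    rw [T₁.parent_root, hroot, T₂.parent_root]
  · -- T₂.parent v is an ancestor of v in T₁, distinct from v
    have h2v : T₂.isAncestor (T₂.parent v) v := T₂.anc_step v
    have h2v1 : T₁.isAncestor (T₂.parent v) v := (anc_iff _ _).mpr h2v
    have hne2 : T₂.parent v ≠ v := T₂.parent_ne (hroot ▸ hv)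
    have hA : T₁.isAncestor (T₂.parent v) (T₁.parent v) := T₁.strict_anc h2v1 hne2
    have h1v : T₁.isAncestor (T₁.parent v) v := T₁.anc_step v
    have h1v2 : T₂.isAncestor (T₁.parent v) v := (anc_iff _ _).mp h1v
    have hne1 : T₁.parent v ≠ v := T₁.parent_ne hv
    have hB : T₂.isAncestor (T₁.parent v) (T₂.parent v) := T₂.strict_anc h1v2 hne1
    exact T₁.anc_antisymm ((anc_iff _ _).mpr hB) hA
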